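/- Let (L,|·|) be a complete non-Archimedean valued field and P ∈ L[z] a polynomial of degree d ≥ 2. Then the sequence of functions g_n(z) := d^{-n} log max{1, |P^n(z)|} converges uniformly on L to a function g_P, and the limit satisfies g_P(P(z)) = d · g_P(z) for all z ∈ L. -/

import Mathlib

open Filter Finset

/-- Basic estimate: `|log max(1,|P(z)|) - d·log max(1,|z|)|` is uniformly bounded. -/
lemma key_est {L : Type*} [NormedField L] (P : Polynomial L) (d : ℕ) (hd : 2 ≤ d)
    (hdeg : P.natDegree = d) :
    ∃ M : ℝ, 0 ≤ M ∧ ∀ z : L,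
      |Real.log (max 1 ‖Polynomial.eval z P‖) - d * Real.log (max 1 ‖z‖)| ≤ M := by
  have hP0 : P ≠ 0 := by
    intro h
    rw [h] at hdeg
    simp at hdeg
    omega
  set a := P.leadingCoeff with ha_def
  have ha : 0 < ‖a‖ := norm_pos_iff.mpr (Polynomial.leadingCoeff_ne_zero.mpr hP0)
  set B : ℝ := ∑ i ∈ Finset.range (d + 1), ‖P.coeff i‖ with hB_def
  set B' : ℝ := ∑ i ∈ Finset.range d, ‖P.coeff i‖ with hB'_def
  have hB' : 0 ≤ B' := Finset.sum_nonneg fun _ _ => norm_nonneg _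
  set C : ℝ := max 1 B with hC_def
  have hC1 : (1 : ℝ) ≤ C := le_max_left _ _
  have hC0 : (0 : ℝ) < C := lt_of_lt_of_le one_pos hC1
  -- upper bound
  have hup : ∀ z : L, max 1 ‖Polynomial.eval z P‖ ≤ C * (max 1 ‖z‖) ^ d := by
    intro z
    set m := max 1 ‖z‖ with hm_def
    have hm : (1 : ℝ) ≤ m := le_max_left _ _
    have hm0 : (0 : ℝ) ≤ m := le_trans zero_le_one hm
    have hmd : (1 : ℝ) ≤ m ^ d := one_le_pow₀ hm
    have h1 : ‖Polynomial.eval z P‖ ≤ B * m ^ d := by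
      rw [Polynomial.eval_eq_sum_range, hdeg]
      calc ‖∑ i ∈ Finset.range (d + 1), P.coeff i * z ^ i‖
          ≤ ∑ i ∈ Finset.range (d + 1), ‖P.coeff i * z ^ i‖ := norm_sum_le _ _
        _ ≤ ∑ i ∈ Finset.range (d + 1), ‖P.coeff i‖ * m ^ d := by
            refine Finset.sum_le_sum fun i hi => ?_
            rw [norm_mul, norm_pow]
            refine mul_le_mul_of_nonneg_left ?_ (norm_nonneg _)
            calc ‖z‖ ^ i ≤ m ^ i := pow_le_pow_left₀ (norm_nonneg z) (le_max_right _ _) i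
              _ ≤ m ^ d := pow_le_pow_right₀ hm (Nat.lt_succ_iff.mp (Finset.mem_range.mp hi))
        _ = B * m ^ d := by rw [← Finset.sum_mul]
    refine max_le ?_ ?_
    · nlinarith
    · calc ‖Polynomial.eval z P‖ ≤ B * m ^ d := h1
        _ ≤ C * m ^ d := by nlinarith [le_max_right (1 : ℝ) B]
  -- lower bound
  set R : ℝ := 1 + 2 * (B' + 1) / ‖a‖ with hR_def
  have hR1 : (1 : ℝ) ≤ R := by
    rw [hR_def]
    have : 0 ≤ 2 * (B' + 1) / ‖a‖ := by positivity
    linarith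
  set R1 : ℝ := max 1 R with hR1_def
  have hR10 : (0 : ℝ) < R1 := lt_of_lt_of_le one_pos (le_max_left _ _)
  have hR1d : (0 : ℝ) < R1 ^ d := pow_pos hR10 d
  set c : ℝ := min ((R1 ^ d)⁻¹) (min 1 (‖a‖ / 2)) with hc_def
  have hc : 0 < c := by
    refine lt_min (by positivity) (lt_min one_pos (by positivity))
  have hlow : ∀ z : L, c * (max 1 ‖z‖) ^ d ≤ max 1 ‖Polynomial.eval z P‖ := by
    intro z
    set m := max 1 ‖z‖ with hm_def
    have hm : (1 : ℝ) ≤ m := le_max_left _ _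
    have hm0 : (0 : ℝ) ≤ m := le_trans zero_le_one hm
    by_cases hz : ‖z‖ ≤ R
    · have hmR : m ≤ R1 := max_le (le_max_left _ _) (le_trans hz (le_max_right _ _))
      have h1 : c * m ^ d ≤ 1 := by
        calc c * m ^ d ≤ (R1 ^ d)⁻¹ * R1 ^ d := by
              refine mul_le_mul (min_le_left _ _) (pow_le_pow_left₀ hm0 hmR d)
                (by positivity) (by positivity)
          _ = 1 := inv_mul_cancel₀ (ne_of_gt hR1d)
      exact le_trans h1 (le_max_left _ _)
    · push_neg at hz
      have hz1 : (1 : ℝ) ≤ ‖z‖ := le_trans hR1 hz.le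
      have hmz : m = ‖z‖ := max_eq_right hz1
      obtain ⟨e, he⟩ : ∃ e, d = e + 1 := ⟨d - 1, by omega⟩
      have hze : (0 : ℝ) ≤ ‖z‖ ^ e := pow_nonneg (norm_nonneg z) e
      -- bound the lower-order terms
      have hQ : ‖Polynomial.eval z P.eraseLead‖ ≤ B' * ‖z‖ ^ e := by
        have hdeg' : P.eraseLead.natDegree < d := by
          have := P.eraseLead_natDegree_le
          omega
        rw [Polynomial.eval_eq_sum_range' hdeg']
        calc ‖∑ i ∈ Finset.range d, P.eraseLead.coeff i * z ^ i‖
            ≤ ∑ i ∈ Finset.range d, ‖P.eraseLead.coeff i * z ^ i‖ := norm_sum_le _ _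
          _ ≤ ∑ i ∈ Finset.range d, ‖P.coeff i‖ * ‖z‖ ^ e := by
              refine Finset.sum_le_sum fun i hi => ?_
              have hine : i ≠ P.natDegree := by
                rw [hdeg]; exact Nat.ne_of_lt (Finset.mem_range.mp hi)
              rw [norm_mul, norm_pow, Polynomial.eraseLead_coeff, if_neg hine]
              refine mul_le_mul_of_nonneg_left ?_ (norm_nonneg _)
              exact pow_le_pow_right₀ hz1 (by
                have := Finset.mem_range.mp hi; omega)
          _ = B' * ‖z‖ ^ e := by rw [← Finset.sum_mul]
      have hPz : Polynomial.eval z P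
          = Polynomial.eval z P.eraseLead + a * z ^ d := by
        conv_lhs => rw [← P.eraseLead_add_C_mul_X_pow]
        simp [hdeg, ha_def]
      have h2 : ‖a‖ * ‖z‖ ^ d - B' * ‖z‖ ^ e ≤ ‖Polynomial.eval z P‖ := by
        have h3 : ‖a * z ^ d‖ ≤ ‖Polynomial.eval z P‖ + ‖Polynomial.eval z P.eraseLead‖ := by
          have : a * z ^ d = Polynomial.eval z P - Polynomial.eval z P.eraseLead := by
            rw [hPz]; ring
          rw [this]
          exact norm_sub_le _ _
        rw [norm_mul, norm_pow] at h3
        linarith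
      have hBz : B' ≤ ‖a‖ / 2 * ‖z‖ := by
        have h4 : 2 * (B' + 1) / ‖a‖ ≤ ‖z‖ := by
          rw [hR_def] at hz
          linarith
        rw [div_le_iff₀ ha] at h4
        nlinarith
      have hzd : ‖z‖ ^ d = ‖z‖ ^ e * ‖z‖ := by rw [he, pow_succ]
      have key : ‖a‖ / 2 * ‖z‖ ^ d ≤ ‖Polynomial.eval z P‖ := by
        nlinarith [mul_le_mul_of_nonneg_right hBz hze]
      calc c * m ^ d ≤ ‖a‖ / 2 * ‖z‖ ^ d := by
            rw [hmz]
            exact mul_le_mul_of_nonneg_right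
              (le_trans (min_le_right _ _) (min_le_right _ _))
              (pow_nonneg (norm_nonneg z) d)
        _ ≤ ‖Polynomial.eval z P‖ := key
        _ ≤ max 1 ‖Polynomial.eval z P‖ := le_max_right _ _
  -- assemble
  refine ⟨|Real.log C| + |Real.log c|, by positivity, fun z => ?_⟩
  set m := max 1 ‖z‖ with hm_def
  have hm : (1 : ℝ) ≤ m := le_max_left _ _
  have hm0 : (0 : ℝ) < m := lt_of_lt_of_le one_pos hm
  have hmd : (0 : ℝ) < m ^ d := pow_pos hm0 d
  have hPz0 : (0 : ℝ) < max 1 ‖Polynomial.eval z P‖ :=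
    lt_of_lt_of_le one_pos (le_max_left _ _)
  have hiup : Real.log (max 1 ‖Polynomial.eval z P‖) ≤ Real.log C + d * Real.log m := by
    have := Real.log_le_log hPz0 (hup z)
    rwa [Real.log_mul (ne_of_gt hC0) (ne_of_gt hmd), Real.log_pow] at this
  have hilow : Real.log c + d * Real.log m ≤ Real.log (max 1 ‖Polynomial.eval z P‖) := by
    have := Real.log_le_log (by positivity) (hlow z)
    rwa [Real.log_mul (ne_of_gt hc) (ne_of_gt hmd), Real.log_pow] at this
  rw [abs_le]
  constructor
  · have h5 := neg_abs_le (Real.log c)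
    have h6 := abs_nonneg (Real.log C)
    linarith
  · have h5 := le_abs_self (Real.log C)
    have h6 := abs_nonneg (Real.log c)
    linarith

/-- The sequence `g_n(z) = d^{-n} log max{1,‖P^n(z)‖}` converges uniformly on `L`
to a function `g_P` satisfying `g_P ∘ P = d · g_P`. -/
theorem stmt1 {L : Type*} [NormedField L] [CompleteSpace L] [IsUltrametricDist L]
    (P : Polynomial L) (d : ℕ) (hd : 2 ≤ d) (hdeg : P.natDegree = d) :
    ∃ gP : L → ℝ,
      TendstoUniformly
        (fun (n : ℕ) (z : L) =>
          (1 / (d : ℝ) ^ n) * Real.log (max 1 ‖(fun w => Polynomial.eval w P)^[n] z‖))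
        gP Filter.atTop ∧
      ∀ z : L, gP (Polynomial.eval z P) = (d : ℝ) * gP z := by
  obtain ⟨M, hM0, hM⟩ := key_est P d hd hdeg
  have hd0 : (0 : ℝ) < d := by
    have : (2 : ℝ) ≤ d := by exact_mod_cast hd
    linarith
  set iter : L → L := fun w => Polynomial.eval w P with hiter
  set g : ℕ → L → ℝ :=
    fun n z => (1 / (d : ℝ) ^ n) * Real.log (max 1 ‖iter^[n] z‖) with hg
  set f : ℕ → L → ℝ := fun k z => g (k + 1) z - g k z with hf
  set u : ℕ → ℝ := fun k => 1 / (d : ℝ) ^ (k + 1) * M with hu_def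
  have hfu : ∀ (k : ℕ) (z : L), ‖f k z‖ ≤ u k := by
    intro k z
    have hit : iter^[k + 1] z = Polynomial.eval (iter^[k] z) P :=
      Function.iterate_succ_apply' iter k z
    set w := iter^[k] z with hw
    have hrw : f k z = (1 / (d : ℝ) ^ (k + 1)) *
        (Real.log (max 1 ‖Polynomial.eval w P‖) - d * Real.log (max 1 ‖w‖)) := by
      simp only [hf, hg, hit]
      rw [pow_succ]
      field_simp
      ring
    rw [hrw, Real.norm_eq_abs, abs_mul, abs_of_pos (by positivity)]
    exact mul_le_mul_of_nonneg_left (hM w) (by positivity)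
  have hu : Summable u := by
    have hgeo : Summable fun k : ℕ => (1 / (d : ℝ)) ^ k :=
      summable_geometric_of_lt_one (by positivity) (by
        rw [div_lt_one hd0]
        have : (2 : ℝ) ≤ d := by exact_mod_cast hd
        linarith)
    refine (hgeo.mul_right (1 / (d : ℝ) * M)).congr fun k => ?_
    simp only [hu_def]
    rw [← one_div_pow (d : ℝ) (k + 1), pow_succ]
    ring
  have htu := tendstoUniformly_tsum_nat hu hfu
  set gP : L → ℝ := fun z => g 0 z + ∑' k, f k z with hgP
  have hg_eq : ∀ (n : ℕ) (z : L), g n z = g 0 z + ∑ k ∈ Finset.range n, f k z := by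
    intro n z
    rw [show (∑ k ∈ Finset.range n, f k z) = g n z - g 0 z from
      Finset.sum_range_sub (fun k => g k z) n]
    ring
  have htg : TendstoUniformly g gP Filter.atTop := by
    rw [Metric.tendstoUniformly_iff] at htu ⊢
    intro ε hε
    filter_upwards [htu ε hε] with n hn z
    have h := hn z
    rw [hg_eq n z]
    simpa [hgP, dist_add_left] using h
  refine ⟨gP, htg, fun z => ?_⟩
  have h1 : Filter.Tendsto (fun n => g n (Polynomial.eval z P)) Filter.atTop
      (nhds (gP (Polynomial.eval z P))) := htg.tendsto_at _
  have h2 : ∀ n : ℕ, g n (Polynomial.eval z P) = (d : ℝ) * g (n + 1) z := by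
    intro n
    have hit : iter^[n] (Polynomial.eval z P) = iter^[n + 1] z :=
      (Function.iterate_succ_apply iter n z).symm
    simp only [hg, hit]
    rw [pow_succ]
    field_simp
  have h3 : Filter.Tendsto (fun n => (d : ℝ) * g (n + 1) z) Filter.atTop
      (nhds ((d : ℝ) * gP z)) := by
    have h4 : Filter.Tendsto (fun n => g (n + 1) z) Filter.atTop (nhds (gP z)) :=
      (htg.tendsto_at z).comp (Filter.tendsto_add_atTop_nat 1)
    exact h4.const_mul _
  simp only [h2] at h1
  exact tendsto_nhds_unique h1 h3
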